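/- Let T be a finite abelian group and β : T × T → F^× a nondegenerate alternating bicharacter (multiplicative in each variable, β(t,t) = 1 for all t, and β(u,T) = 1 implies u = e). Then T is isomorphic to H × H for some finite abelian group H; in particular |T| is a perfect square. -/

import Mathlib

universe u

theorem bichar_aux {F : Type*} [Field F] :
    ∀ (n : ℕ) (T : Type u) [CommGroup T] [Fintype T] (β : T → T → Fˣ),
      (∀ t u v : T, β (u * v) t = β u t * β v t) →
      (∀ t u v : T, β t (u * v) = β t u * β t v) →
      (∀ t : T, β t t = 1) →
      (∀ u : T, (∀ t : T, β u t = 1) → u = 1) →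
      Nat.card T ≤ n →
      ∃ (H : Type) (_ : CommGroup H) (_ : Fintype H), Nonempty (T ≃* H × H) := by
  intro n
  induction n with
  | zero =>
    intro T _ _ β _ _ _ _ hcard
    have : 0 < Nat.card T := Nat.card_pos
    omega
  | succ n ih =>
    intro T _ _ β hml hmr halt hnd hcard
    by_cases htriv : ∀ t : T, t = 1
    · refine ⟨PUnit, inferInstance, inferInstance, ⟨?_⟩⟩
      exact
        { toFun := fun _ => 1
          invFun := fun _ => 1
          left_inv := fun t => (htriv t).symm
          right_inv := fun p => Subsingleton.elim _ _
          map_mul' := fun _ _ => Subsingleton.elim _ _ }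
    push_neg at htriv
    obtain ⟨t0, ht0⟩ := htriv
    -- the adjoint homomorphism
    let φ : T →* T →* Fˣ :=
      MonoidHom.mk' (fun u => MonoidHom.mk' (fun t => β u t) (fun a b => hmr u a b))
        (fun u v => MonoidHom.ext fun t => hml t u v)
    have hφapp : ∀ u t : T, φ u t = β u t := fun _ _ => rfl
    have hφinj : Function.Injective φ := by
      rw [injective_iff_map_eq_one]
      intro u hu
      exact hnd u fun t => by
        simpa [hφapp] using DFunLike.congr_fun hu t
    have honeL : ∀ t : T, β 1 t = 1 := fun t => by
      have h := hml t 1 1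
      rw [one_mul] at h
      exact (mul_left_cancel ((mul_one (β 1 t)).trans h)).symm
    have honeR : ∀ u : T, β u 1 = 1 := fun u => map_one (φ u)
    have hRpow : ∀ (u v : T) (k : ℕ), β u (v ^ k) = β u v ^ k := fun u v k =>
      map_pow (φ u) v k
    have hLpow : ∀ (u v : T) (k : ℕ), β (u ^ k) v = β u v ^ k := fun u v k => by
      induction k with
      | zero => simpa using honeL v
      | succ m ihm => rw [pow_succ, hml, ihm, pow_succ]
    have hRinv : ∀ u v : T, β u v⁻¹ = (β u v)⁻¹ := fun u v => map_inv (φ u) v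
    have hskew : ∀ u v : T, β v u = (β u v)⁻¹ := by
      intro u v
      have h := halt (u * v)
      rw [hml (u*v) u v, hmr u u v, hmr v u v, halt u, halt v, one_mul, mul_one] at h
      exact eq_inv_of_mul_eq_one_right h
    -- exponent
    set e := Monoid.exponent T with he
    have hene : e ≠ 0 := Monoid.exponent_ne_zero_of_finite
    have he1 : 1 < e := by
      have h1 : e ≠ 1 := by
        intro h
        have h2 := Monoid.pow_exponent_eq_one t0
        rw [← he, h, pow_one] at h2
        exact ht0 h2
      omega
    obtain ⟨x, hxord⟩ := Monoid.exists_orderOf_eq_exponent (Monoid.exponent_ne_zero.mp hene)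
    rw [← he] at hxord
    have hφxord : orderOf (φ x) = e := by rw [orderOf_injective φ hφinj x, hxord]
    -- the image of φ x is a finite cyclic subgroup of Fˣ
    haveI : Finite ((φ x).range) := Set.Finite.to_subtype (Set.finite_range (φ x))
    obtain ⟨g, hg⟩ := IsCyclic.exists_generator (α := (φ x).range)
    obtain ⟨y, hy⟩ := g.2
    set ζ : Fˣ := β x y with hζdef
    have hgy : (g : Fˣ) = ζ := by rw [← hy]; rfl
    -- order of ζ equals e
    have hφxe : (φ x) ^ e = 1 := by
      rw [← map_pow φ x e]
      have : x ^ e = 1 := by rw [← hxord, pow_orderOf_eq_one]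
      rw [this, map_one]
    have hζe : ζ ^ e = 1 := by
      have := DFunLike.congr_fun hφxe y
      simpa [hφapp, hζdef] using this
    have hζord : orderOf ζ = e := by
      have hd1 : orderOf ζ ∣ e := orderOf_dvd_of_pow_eq_one hζe
      have hd2 : e ∣ orderOf ζ := by
        rw [← hφxord]
        apply orderOf_dvd_of_pow_eq_one
        ext t
        obtain ⟨k, hk⟩ := hg ⟨β x t, ⟨t, rfl⟩⟩
        have hk' : (g : Fˣ) ^ k = β x t := by
          have := congrArg (Subtype.val) hk
          simpa using this
        have : ((φ x) ^ orderOf ζ) t = (β x t) ^ orderOf ζ := by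
          simp [hφapp]
        rw [this, ← hk', hgy, ← zpow_natCast, ← zpow_mul, mul_comm, zpow_mul,
          zpow_natCast, pow_orderOf_eq_one, one_zpow]
        rfl
      exact Nat.dvd_antisymm hd1 hd2
    haveI : NeZero e := ⟨hene⟩
    have hζpow1 : ∀ k : ℕ, ζ ^ k = 1 → e ∣ k := fun k hk =>
      hζord ▸ orderOf_dvd_of_pow_eq_one hk
    -- every value of β is a power of ζ
    have hprim : IsPrimitiveRoot ζ e := hζord ▸ IsPrimitiveRoot.orderOf ζ
    have hval : ∀ u v : T, ∃ k : ℕ, k < e ∧ β u v = ζ ^ k := by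
      intro u v
      have hkill : β u v ^ e = 1 := by
        have hv : v ^ e = 1 := Monoid.pow_exponent_eq_one v
        rw [← hRpow, hv]
        exact map_one (φ u)
      have hmem : β u v ∈ Subgroup.zpowers ζ := by
        rw [hprim.zpowers_eq]
        exact (mem_rootsOfUnity e (β u v)).mpr hkill
      obtain ⟨j, hj⟩ := Subgroup.mem_zpowers_iff.mp hmem
      refine ⟨(j % (e : ℤ)).toNat, ?_, ?_⟩
      · have h0 : (0:ℤ) < e := by exact_mod_cast Nat.pos_of_ne_zero hene
        have := Int.emod_lt_of_pos j h0
        omega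
      · have h0 : (0:ℤ) < e := by exact_mod_cast Nat.pos_of_ne_zero hene
        have hnn : 0 ≤ j % (e:ℤ) := Int.emod_nonneg j (by omega)
        rw [← hj, ← zpow_natCast, Int.toNat_of_nonneg hnn, ← hζord, zpow_mod_orderOf]
    -- the perpendicular subgroup
    set K : Subgroup T := (φ x).ker ⊓ (φ y).ker with hK
    have hKmem : ∀ t : T, t ∈ K ↔ β x t = 1 ∧ β y t = 1 := by
      intro t
      simp [hK, Subgroup.mem_inf, MonoidHom.mem_ker, hφapp]
    have hβyx : β y x = ζ⁻¹ := hskew x y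
    -- decomposition of an arbitrary element
    have hdecomp : ∀ t : T, ∃ (a b : ℕ) (k : T), k ∈ K ∧ t = x ^ a * y ^ b * k := by
      intro t
      obtain ⟨b, hb, hB⟩ := hval x t
      obtain ⟨c, hc, hC⟩ := hval y t
      refine ⟨e - c % e, b, (x ^ (e - c % e) * y ^ b)⁻¹ * t, ?_, by group⟩
      have hac : ζ ^ (e - c % e) * ζ ^ c = 1 := by
        have hle : c % e ≤ e := Nat.le_of_lt (Nat.mod_lt c (by omega))
        have hc' : ζ ^ c = ζ ^ (c % e) := by
          rw [← hζord]
          exact (pow_mod_orderOf ζ c).symm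
        rw [hc', ← pow_add, Nat.sub_add_cancel hle, hζe]
      rw [hKmem]
      constructor
      · rw [hmr, hRinv, hmr]
        simp only [hRpow]
        rw [halt, one_pow, one_mul, hB, ← hζdef, inv_mul_cancel]
      · rw [hmr, hRinv, hmr]
        simp only [hRpow]
        rw [halt, one_pow, mul_one, hC, hβyx, inv_pow, inv_inv]
        exact hac
    -- K is strictly smaller than T
    have hxK : x ∉ K := by
      rw [hKmem]
      rintro ⟨-, h2⟩
      rw [hβyx, inv_eq_one] at h2
      rw [h2] at hζord
      simp at hζord
      omega
    have hcardK : Nat.card K ≤ n := by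
      have hlt : Nat.card K < Nat.card T := by
        have h1 : Nat.card K = (K : Set T).ncard := Nat.card_coe_set_eq (K : Set T)
        rw [h1, ← Set.ncard_univ T]
        apply Set.ncard_lt_ncard _ (Set.finite_univ)
        exact Set.ssubset_univ_iff.mpr fun h => hxK (h.ge (Set.mem_univ x))
      omega
    -- restricted bicharacter on K
    have hmemK_x : ∀ k : T, k ∈ K → β k x = 1 := fun k hk => by
      rw [hskew, ((hKmem k).mp hk).1, inv_one]
    have hmemK_y : ∀ k : T, k ∈ K → β k y = 1 := fun k hk => by
      rw [hskew, ((hKmem k).mp hk).2, inv_one]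
    haveI : Fintype K := Fintype.ofFinite ↥K
    obtain ⟨H', iH'c, iH'f, ⟨eK⟩⟩ :=
      ih K (fun a b => β (a : T) (b : T)) (fun t u v => hml t u v) (fun t u v => hmr t u v) (fun t => halt t)
        (fun k hk1 => by
          have hone : (k : T) = 1 := by
            apply hnd
            intro t
            obtain ⟨a, b, k', hk', ht⟩ := hdecomp t
            have hkx : β (k:T) (x ^ a) = 1 := by rw [hRpow, hmemK_x k k.2, one_pow]
            have hky : β (k:T) (y ^ b) = 1 := by rw [hRpow, hmemK_y k k.2, one_pow]
            have hkk : β (k:T) k' = 1 := hk1 ⟨k', hk'⟩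
            rw [ht, hmr, hmr, hkx, hky, hkk, one_mul, one_mul]
          exact Subtype.ext hone)
        hcardK
    -- the cyclic part
    set C := Multiplicative (ZMod e) with hC
    let f : C → T := fun i => x ^ (Multiplicative.toAdd i).val
    let g' : C → T := fun i => y ^ (Multiplicative.toAdd i).val
    have hyord : orderOf y = e := by
      apply Nat.dvd_antisymm (Monoid.order_dvd_exponent y)
      apply hζpow1
      rw [← hRpow, pow_orderOf_eq_one]
      exact map_one (φ x)
    have hpowmod : ∀ (z : T), orderOf z = e → ∀ m : ℕ, z ^ (m % e) = z ^ m := by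
      intro z hz m
      rw [← hz]
      exact pow_mod_orderOf z m
    have hfhom : ∀ i j : C, f (i * j) = f i * f j := by
      intro i j
      show x ^ (Multiplicative.toAdd (i * j)).val = _
      have : Multiplicative.toAdd (i * j) = Multiplicative.toAdd i + Multiplicative.toAdd j := rfl
      rw [this, ZMod.val_add, hpowmod x hxord, pow_add]
    have hghom : ∀ i j : C, g' (i * j) = g' i * g' j := by
      intro i j
      show y ^ (Multiplicative.toAdd (i * j)).val = _
      have : Multiplicative.toAdd (i * j) = Multiplicative.toAdd i + Multiplicative.toAdd j := rfl
      rw [this, ZMod.val_add, hpowmod y hyord, pow_add]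
    let fhom : C →* T := MonoidHom.mk' f hfhom
    let ghom : C →* T := MonoidHom.mk' g' hghom
    let Ψ : C × C × K →* T :=
      (fhom.comp (MonoidHom.fst _ _)) *
        ((ghom.comp ((MonoidHom.fst _ _).comp (MonoidHom.snd _ _))) *
          (K.subtype.comp ((MonoidHom.snd _ _).comp (MonoidHom.snd _ _))))
    have hΨapp : ∀ p : C × C × K, Ψ p = f p.1 * (g' p.2.1 * (p.2.2 : T)) := fun _ => rfl
    have hf1 : ∀ i : C, β x (f i) = 1 := fun i => by
      show β x (x ^ _) = 1
      rw [hRpow, halt, one_pow]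
    have hg1 : ∀ i : C, β x (g' i) = ζ ^ (Multiplicative.toAdd i).val := fun i => by
      show β x (y ^ _) = _
      rw [hRpow]
    have hΨinj : Function.Injective Ψ := by
      rw [injective_iff_map_eq_one]
      rintro ⟨i, j, k⟩ hp
      rw [hΨapp] at hp
      have hkx : β x (k : T) = 1 := ((hKmem _).mp k.2).1
      have hky : β y (k : T) = 1 := ((hKmem _).mp k.2).2
      have hj0 : j = 1 := by
        have := congrArg (fun t => β x t) hp
        simp only [hmr, hf1, hg1, hkx, honeR, one_mul, mul_one] at this
        have hdvd := hζpow1 _ this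
        have hlt : (Multiplicative.toAdd j).val < e := ZMod.val_lt _
        have : (Multiplicative.toAdd j).val = 0 := Nat.eq_zero_of_dvd_of_lt hdvd hlt
        have hj' : Multiplicative.toAdd j = 0 := (ZMod.val_eq_zero _).mp this
        exact hj'
      have hi0 : i = 1 := by
        have := congrArg (fun t => β y t) hp
        have hyf : β y (f i) = ζ⁻¹ ^ (Multiplicative.toAdd i).val := by
          show β y (x ^ _) = _
          rw [hRpow, hβyx]
        have hyg : β y (g' j) = 1 := by
          show β y (y ^ _) = 1
          rw [hRpow, halt, one_pow]
        simp only [hmr, hyf, hyg, hky, honeR, one_mul, mul_one] at this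
        rw [inv_pow, inv_eq_one] at this
        have hdvd := hζpow1 _ this
        have hlt : (Multiplicative.toAdd i).val < e := ZMod.val_lt _
        have : (Multiplicative.toAdd i).val = 0 := Nat.eq_zero_of_dvd_of_lt hdvd hlt
        have hi' : Multiplicative.toAdd i = 0 := (ZMod.val_eq_zero _).mp this
        exact hi'
      subst hi0; subst hj0
      have hf1' : f 1 = 1 := by
        show x ^ (Multiplicative.toAdd (1 : C)).val = 1
        have : Multiplicative.toAdd (1 : C) = 0 := rfl
        rw [this, ZMod.val_zero, pow_zero]
      have hg1' : g' 1 = 1 := by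
        show y ^ (Multiplicative.toAdd (1 : C)).val = 1
        have : Multiplicative.toAdd (1 : C) = 0 := rfl
        rw [this, ZMod.val_zero, pow_zero]
      rw [hf1', hg1', one_mul, one_mul] at hp
      have : k = 1 := Subtype.ext hp
      rw [this]
      rfl
    have hΨsurj : Function.Surjective Ψ := by
      intro t
      obtain ⟨a, b, k, hk, ht⟩ := hdecomp t
      refine ⟨⟨Multiplicative.ofAdd (a : ZMod e), Multiplicative.ofAdd (b : ZMod e), ⟨k, hk⟩⟩, ?_⟩
      rw [hΨapp]
      have hfa : f (Multiplicative.ofAdd (a : ZMod e)) = x ^ a := by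
        show x ^ (ZMod.val (a : ZMod e)) = x ^ a
        rw [ZMod.val_natCast, hpowmod x hxord]
      have hgb : g' (Multiplicative.ofAdd (b : ZMod e)) = y ^ b := by
        show y ^ (ZMod.val (b : ZMod e)) = y ^ b
        rw [ZMod.val_natCast, hpowmod y hyord]
      rw [hfa, hgb, ht, mul_assoc]
    let eT : C × C × K ≃* T := MulEquiv.ofBijective Ψ ⟨hΨinj, hΨsurj⟩
    refine ⟨C × H', inferInstance, inferInstance, ⟨?_⟩⟩
    exact
      eT.symm.trans <|
        ((MulEquiv.refl C).prodCongr ((MulEquiv.refl C).prodCongr eK)).trans <|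
          (MulEquiv.prodAssoc (M := C) (N := C) (P := H' × H')).symm.trans
            (MulEquiv.prodProdProdComm C C H' H')

/-- A finite abelian group admitting a nondegenerate alternating bicharacter with values
in `Fˣ` is isomorphic to `H × H` for some finite abelian group `H`; in particular its
order is a perfect square. -/
theorem group_with_nondeg_alternating_bicharacter_is_square
    {F : Type*} [Field F] {T : Type*} [CommGroup T] [Fintype T]
    (β : T → T → Fˣ)
    (hmul_left : ∀ t u v : T, β (u * v) t = β u t * β v t)
    (hmul_right : ∀ t u v : T, β t (u * v) = β t u * β t v)
    (halt : ∀ t : T, β t t = 1)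
    (hnondeg : ∀ u : T, (∀ t : T, β u t = 1) → u = 1) :
    ∃ (H : Type) (_ : CommGroup H) (_ : Fintype H),
      Nonempty (T ≃* H × H) ∧ ∃ m : ℕ, Fintype.card T = m ^ 2 := by
  obtain ⟨H, iHc, iHf, ⟨eH⟩⟩ :=
    bichar_aux (Nat.card T) T β hmul_left hmul_right halt hnondeg le_rfl
  refine ⟨H, iHc, iHf, ⟨eH⟩, Fintype.card H, ?_⟩
  rw [Fintype.card_congr eH.toEquiv, Fintype.card_prod, sq]
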